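/- Let σ₁, σ₂ be K-linear automorphisms of 𝒞ₙ and 𝒞ₘ respectively, and let τ : 𝒞ₙ → 𝒞ₘ be a K-linear functor with τσ₁ = σ₂τ. Given any good basis (y_{kl}) for (𝒞ₘ,σ₂), there is a unique good basis (x_{ij}) for (𝒞ₙ,σ₁) such that τ(x_{ij}) = y_{τ(i)τ(j)} for all i,j ∈ [n] (equivalently, all transition coefficients of τ with respect to these bases equal 1). -/
import Mathlib


open CategoryTheory

/-- The category `𝒞ₙ`: objects are `Fin n`, every hom-space is the one-dimensional
`K`-vector space `K`, and composition is multiplication in `K` (so the identity of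
every object is `1 : K`). -/
def Cn (K : Type) (n : ℕ) : Type := Fin n

section CnSetup

variable {K : Type} [Field K] {n : ℕ}

instance : Category (Cn K n) where
  Hom _ _ := K
  id _ := (1 : K)
  comp f g := @HMul.hMul K K K _ f g
  id_comp f := @one_mul K _ f
  comp_id f := @mul_one K _ f
  assoc f g h := @mul_assoc K _ f g h

instance : Preadditive (Cn K n) where
  homGroup _ _ := inferInstanceAs (AddCommGroup K)
  add_comp _ _ _ f f' g := @add_mul K _ _ _ f f' g
  comp_add _ _ _ f g g' := @mul_add K _ _ _ f g g'

instance : CategoryTheory.Linear K (Cn K n) where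
  homModule _ _ := inferInstanceAs (Module K K)
  smul_comp _ _ _ r f g := @smul_mul_assoc K K _ _ _ r f g
  comp_smul _ _ _ f r g := @mul_smul_comm K K _ _ _ r f g

/-- The morphism `X ⟶ Y` of `𝒞ₙ` given by the scalar `r`.  In particular
`CnHom j i 1` is the canonical basic morphism `x_{ij} : j ⟶ i`. -/
def CnHom (X Y : Cn K n) (r : K) : X ⟶ Y := r

/-- The scalar underlying a morphism of `𝒞ₙ`. -/
def toK {X Y : Cn K n} (f : X ⟶ Y) : K := f

end CnSetup

/-- A functor between `K`-linear categories is `K`-linear if it is additive on hom-spaces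
and commutes with the action of `K` on hom-spaces. -/
def IsKLinearFunctor (K : Type) [Field K] {C D : Type*} [Category C] [Category D]
    [Preadditive C] [Preadditive D] [CategoryTheory.Linear K C] [CategoryTheory.Linear K D]
    (F : C ⥤ D) : Prop :=
  (∀ (X Y : C) (f g : X ⟶ Y), F.map (f + g) = F.map f + F.map g) ∧
  (∀ (X Y : C) (r : K) (f : X ⟶ Y), F.map (r • f) = r • F.map f)

/-- `i` and `j` lie in the same orbit of the permutation `π`. -/
def SameOrbit {N : ℕ} (π : Equiv.Perm (Fin N)) (i j : Fin N) : Prop :=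
  ∃ k : ℕ, (π ^ k) i = j

/-- The number of elements of the orbit of `i` under the permutation `π`. -/
noncomputable def orbitSize {N : ℕ} (π : Equiv.Perm (Fin N)) (i : Fin N) : ℕ :=
  Set.ncard {j | SameOrbit π i j}

/-- `x` is a multiplicative basis for `𝒞_N` whose transition coefficients for the
`K`-linear automorphism `σ` (with underlying object permutation `σp`) are the scalars
`a i j` (i.e. `σ (x_{ij}) = a_{ij} • x_{σ(i) σ(j)}`), and these coefficients equal `1`
whenever `i` and `j` lie in the same `σp`-orbit: a *good basis* for `(𝒞_N, σ)`. -/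
def IsGoodBasis {K : Type} [Field K] {N : ℕ} (σ : Cn K N ⥤ Cn K N)
    (σp : Equiv.Perm (Fin N)) (x a : Cn K N → Cn K N → K) : Prop :=
  (∀ i j, x i j ≠ 0) ∧ (∀ i j k, x i j * x j k = x i k) ∧ (∀ i j, a i j ≠ 0) ∧
  (∀ i j : Cn K N, σ.map (CnHom j i (x i j)) =
    CnHom (σ.obj j) (σ.obj i) (a i j * x (σp i) (σp j))) ∧
  (∀ i j : Fin N, SameOrbit σp i j → a i j = 1)

section Aux
variable {K : Type} [Field K] {n m : ℕ}

lemma toK_comp {N : ℕ} {X Y Z : Cn K N} (f : X ⟶ Y) (g : Y ⟶ Z) :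
    toK (f ≫ g) = toK f * toK g := rfl

lemma toK_eqToHom {N : ℕ} {X Y : Cn K N} (h : X = Y) : toK (eqToHom h) = 1 := by subst h; rfl

lemma hom_ext {N : ℕ} {X Y : Cn K N} {f g : X ⟶ Y} (h : toK f = toK g) : f = g := h

lemma functor_t (F : Cn K n ⥤ Cn K m) (hF : IsKLinearFunctor K F) :
    ∃ t : Cn K n → Cn K n → K,
      (∀ i j, t i j * t j i = 1) ∧ (∀ i j k, t j k * t i j = t i k) ∧
      (∀ (i j : Cn K n) (r : K), toK (F.map (CnHom j i r)) = r * t i j) := by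
  have hmap : ∀ (i j : Cn K n) (r : K),
      toK (F.map (CnHom j i r)) = r * toK (F.map (CnHom j i (1 : K))) := by
    intro i j r
    have h1 : CnHom j i r = r • CnHom j i (1 : K) := (mul_one r).symm
    rw [h1, hF.2 j i r (CnHom j i 1)]; rfl
  refine ⟨fun i j => toK (F.map (CnHom j i (1:K))), ?_, ?_, hmap⟩
  · intro i j
    have hc : (CnHom j i (1:K)) ≫ (CnHom i j (1:K)) = 𝟙 j := mul_one 1
    have := congrArg toK (congrArg F.map hc)
    rw [F.map_comp, F.map_id] at this
    exact this
  · intro i j k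
    have hc : (CnHom k j (1:K)) ≫ (CnHom j i (1:K)) = CnHom k i (1:K) := mul_one 1
    have := congrArg toK (congrArg F.map hc)
    rw [F.map_comp] at this
    exact this

lemma orbit_map {N M : ℕ} (π : Equiv.Perm (Fin N)) (ρ : Equiv.Perm (Fin M))
    (f : Fin N → Fin M) (hf : ∀ i, f (π i) = ρ (f i)) {i j : Fin N}
    (h : SameOrbit π i j) : SameOrbit ρ (f i) (f j) := by
  obtain ⟨k, hk⟩ := h
  refine ⟨k, ?_⟩
  subst hk
  induction k with
  | zero => simp
  | succ k ih =>
    simp only [pow_succ', Equiv.Perm.mul_apply] at *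
    rw [ih, ← hf]
end Aux

/-- **Lemma (good comparison basis).**  Let `σ₁, σ₂` be `K`-linear automorphisms of `𝒞ₙ`,
`𝒞ₘ` and `τ : 𝒞ₙ ⥤ 𝒞ₘ` a `K`-linear functor with `τ σ₁ = σ₂ τ`.  For any good basis
`(y, c)` for `(𝒞ₘ, σ₂)` there is a unique good basis `x` for `(𝒞ₙ, σ₁)` such that all
transition coefficients of `τ` equal `1`, i.e. `τ (x_{ij}) = y_{τ(i) τ(j)}`. -/
theorem stmt13 (K : Type) [Field K] (n m : ℕ)
    (σ₁ : Cn K n ⥤ Cn K n) (σ₂ : Cn K m ⥤ Cn K m)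
    (hσ₁l : IsKLinearFunctor K σ₁) (hσ₂l : IsKLinearFunctor K σ₂)
    (hσ₁a : ∃ F : Cn K n ⥤ Cn K n, σ₁ ⋙ F = 𝟭 (Cn K n) ∧ F ⋙ σ₁ = 𝟭 (Cn K n))
    (hσ₂a : ∃ F : Cn K m ⥤ Cn K m, σ₂ ⋙ F = 𝟭 (Cn K m) ∧ F ⋙ σ₂ = 𝟭 (Cn K m))
    (σ₁p : Equiv.Perm (Fin n)) (hobj₁ : ∀ i : Cn K n, σ₁.obj i = σ₁p i)
    (σ₂p : Equiv.Perm (Fin m)) (hobj₂ : ∀ i : Cn K m, σ₂.obj i = σ₂p i)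
    (τ : Cn K n ⥤ Cn K m) (hτl : IsKLinearFunctor K τ)
    (hcomm : σ₁ ⋙ τ = τ ⋙ σ₂)
    (y c : Cn K m → Cn K m → K) (hy : IsGoodBasis σ₂ σ₂p y c) :
    ∃! x : Cn K n → Cn K n → K,
      (∃ a : Cn K n → Cn K n → K, IsGoodBasis σ₁ σ₁p x a) ∧
      ∀ i j : Cn K n,
        τ.map (CnHom j i (x i j)) = CnHom (τ.obj j) (τ.obj i) (y (τ.obj i) (τ.obj j)) := by
  obtain ⟨t, htinv, htmul, htmap⟩ := functor_t τ hτl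
  obtain ⟨s, hsinv, hsmul, hsmap⟩ := functor_t σ₁ hσ₁l
  obtain ⟨s₂, hs₂inv, hs₂mul, hs₂map⟩ := functor_t σ₂ hσ₂l
  obtain ⟨hy0, hymul, hc0, hyσ, hyorb⟩ := hy
  have ht0 : ∀ i j, t i j ≠ 0 := fun i j => left_ne_zero_of_mul_eq_one (htinv i j)
  -- object commutation
  have hobjc : ∀ i : Cn K n, τ.obj (σ₁p i) = σ₂p (τ.obj i) := by
    intro i
    have h : τ.obj (σ₁.obj i) = σ₂.obj (τ.obj i) := Functor.congr_obj hcomm i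
    rw [hobj₁ i] at h
    rw [h, hobj₂]
  -- hom commutation on basic morphisms
  have hkey : ∀ i j : Cn K n, s i j * t (σ₁p i) (σ₁p j) = t i j * s₂ (τ.obj i) (τ.obj j) := by
    intro i j
    have h := Functor.congr_hom hcomm (CnHom j i (1 : K))
    have h2 := congrArg toK h
    rw [toK_comp, toK_comp, toK_eqToHom, toK_eqToHom, one_mul, mul_one] at h2
    have hl : toK ((σ₁ ⋙ τ).map (CnHom j i (1:K))) = s i j * t (σ₁p i) (σ₁p j) := by
      show toK (τ.map (σ₁.map (CnHom j i (1:K)))) = _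
      have e1 : σ₁.map (CnHom j i (1:K)) = CnHom (σ₁.obj j) (σ₁.obj i) (1 * s i j) :=
        hom_ext (hsmap i j 1)
      rw [e1, htmap, one_mul]
      rw [hobj₁ i, hobj₁ j]
    have hr : toK ((τ ⋙ σ₂).map (CnHom j i (1:K))) = t i j * s₂ (τ.obj i) (τ.obj j) := by
      show toK (σ₂.map (τ.map (CnHom j i (1:K)))) = _
      have e1 : τ.map (CnHom j i (1:K)) = CnHom (τ.obj j) (τ.obj i) (1 * t i j) :=
        hom_ext (htmap i j 1)
      rw [e1, hs₂map, one_mul]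
    rw [hl, hr] at h2
    exact h2
  -- scalar form of the good-basis equation for y
  have hys : ∀ I J : Cn K m, y I J * s₂ I J = c I J * y (σ₂p I) (σ₂p J) := by
    intro I J
    have h := congrArg toK (hyσ I J)
    rw [hs₂map] at h
    exact h
  set x : Cn K n → Cn K n → K := fun i j => y (τ.obj i) (τ.obj j) * (t i j)⁻¹ with hxdef
  have hx0 : ∀ i j, x i j ≠ 0 := fun i j =>
    mul_ne_zero (hy0 _ _) (inv_ne_zero (ht0 i j))
  have hxt : ∀ i j : Cn K n, x i j * t i j = y (τ.obj i) (τ.obj j) := by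
    intro i j
    exact inv_mul_cancel_right₀ (ht0 i j) _
  refine ⟨x, ⟨⟨fun i j => x i j * s i j * (x (σ₁p i) (σ₁p j))⁻¹, hx0, ?_, ?_, ?_, ?_⟩, ?_⟩, ?_⟩
  · -- multiplicativity
    intro i j k
    have h1 := hymul (τ.obj i) (τ.obj j) (τ.obj k)
    have h2 := htmul i j k
    simp only [hxdef]
    field_simp
    rw [← h1, ← h2]
    ring
  · -- a nonzero
    intro i j
    exact mul_ne_zero (mul_ne_zero (hx0 i j) (left_ne_zero_of_mul_eq_one (hsinv i j)))
      (inv_ne_zero (hx0 _ _))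
  · -- basis equation
    intro i j
    refine hom_ext ?_
    rw [hsmap]
    show x i j * s i j = (x i j * s i j * (x (σ₁p i) (σ₁p j))⁻¹ * x (σ₁p i) (σ₁p j) : K)
    exact (inv_mul_cancel_right₀ (hx0 (σ₁p i) (σ₁p j)) _).symm
  · -- orbit condition
    intro i j hij
    have horb2 : SameOrbit σ₂p (τ.obj i) (τ.obj j) :=
      orbit_map σ₁p σ₂p (fun i => τ.obj i) hobjc hij
    have hc1 : c (τ.obj i) (τ.obj j) = 1 := hyorb _ _ horb2
    have h1 := hkey i j
    have h2 := hys (τ.obj i) (τ.obj j)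
    rw [hc1, one_mul] at h2
    have h3 : x (σ₁p i) (σ₁p j) * t (σ₁p i) (σ₁p j)
        = y (σ₂p (τ.obj i)) (σ₂p (τ.obj j)) := by
      rw [hxt (σ₁p i) (σ₁p j), hobjc i, hobjc j]
    have hgoal : x i j * s i j = x (σ₁p i) (σ₁p j) := by
      apply mul_right_cancel₀ (ht0 (σ₁p i) (σ₁p j))
      rw [h3, mul_assoc, h1, ← mul_assoc, hxt i j, h2]
    show x i j * s i j * (x (σ₁p i) (σ₁p j))⁻¹ = 1
    rw [hgoal]
    exact mul_inv_cancel₀ (hx0 _ _)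
  · -- the τ-condition
    intro i j
    refine hom_ext ?_
    rw [htmap]
    exact hxt i j
  · -- uniqueness
    rintro x' ⟨⟨a', hgood'⟩, hτx'⟩
    funext i j
    have h1 := congrArg toK (hτx' i j)
    rw [htmap] at h1
    have h2 := hxt i j
    have := h1.trans h2.symm
    exact mul_right_cancel₀ (ht0 i j) this
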